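/- Let A ∈ ℂ^{n×n} with index 1. Then the core inverse of A is given by the limit A^⊕ = lim_{λ→0⁺} A A* (A² A* + λI)⁻¹, where the limit is over real λ > 0. -/
import Mathlib

open Matrix Filter Topology

/-- `X` is the core inverse of the index-one matrix `A`. -/
def IsCoreInv {n : ℕ} (A X : Matrix (Fin n) (Fin n) ℂ) : Prop :=
  X * A * X = X ∧ LinearMap.range X.mulVecLin = LinearMap.range Xᴴ.mulVecLin ∧
    LinearMap.range X.mulVecLin = LinearMap.range A.mulVecLin

private lemma mat_ext {n : ℕ} {M N : Matrix (Fin n) (Fin n) ℂ}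
    (h : ∀ v, M *ᵥ v = N *ᵥ v) : M = N := by
  ext i j
  have := congrFun (h (Pi.single j 1)) i
  simpa [Matrix.mulVec_single] using this

private lemma dstar_zero {n : ℕ} {v : Fin n → ℂ}
    (h : dotProduct (star v) v = 0) : v = 0 := by
  have h' : ∑ j, Complex.normSq (v j) = 0 := by
    have hc : (↑(∑ j, Complex.normSq (v j)) : ℂ) = 0 := by
      rw [← h]
      simp [dotProduct, Complex.normSq_eq_conj_mul_self]
    exact_mod_cast hc
  funext i
  have := (Finset.sum_eq_zero_iff_of_nonneg
    (fun j _ => Complex.normSq_nonneg (v j))).mp h' i (Finset.mem_univ i)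
  simpa using Complex.normSq_eq_zero.mp this

theorem stmt_14 {n : ℕ} (A : Matrix (Fin n) (Fin n) ℂ)
    (hind : (A * A).rank = A.rank)
    (X : Matrix (Fin n) (Fin n) ℂ) (hX : IsCoreInv A X) :
    Tendsto (fun lam : ℝ =>
        A * Aᴴ * (A ^ 2 * Aᴴ + (lam : ℂ) • (1 : Matrix (Fin n) (Fin n) ℂ))⁻¹)
      (𝓝[>] (0 : ℝ)) (𝓝 X) := by
  obtain ⟨h1, h2, h3⟩ := hX
  -- range A² = range A
  have hle2 : LinearMap.range (A*A).mulVecLin ≤ LinearMap.range A.mulVecLin := by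
    rw [Matrix.mulVecLin_mul]
    exact LinearMap.range_comp_le_range _ _
  have hrangeAA : LinearMap.range (A*A).mulVecLin = LinearMap.range A.mulVecLin :=
    Submodule.eq_of_le_of_finrank_le hle2 (le_of_eq hind.symm)
  -- ker A² = ker A
  have hkerle : LinearMap.ker A.mulVecLin ≤ LinearMap.ker (A*A).mulVecLin := by
    intro v hv
    simp only [LinearMap.mem_ker, Matrix.mulVecLin_apply] at hv ⊢
    rw [← Matrix.mulVec_mulVec, hv, Matrix.mulVec_zero]
  have hkerAA : LinearMap.ker A.mulVecLin = LinearMap.ker (A*A).mulVecLin := by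
    have r1 := LinearMap.finrank_range_add_finrank_ker A.mulVecLin
    have r2 := LinearMap.finrank_range_add_finrank_ker (A*A).mulVecLin
    refine Submodule.eq_of_le_of_finrank_le hkerle ?_
    have he : (A*A).rank = A.rank := hind
    unfold Matrix.rank at he
    omega
  -- A*X is idempotent with range = range A
  have hee : (A*X)*(A*X) = A*X := by
    rw [Matrix.mul_assoc A X (A*X), ← Matrix.mul_assoc X A X, h1]
  have hrangeAX : LinearMap.range (A*X).mulVecLin = LinearMap.range A.mulVecLin := by
    rw [Matrix.mulVecLin_mul, LinearMap.range_comp, h3, ← LinearMap.range_comp,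
      ← Matrix.mulVecLin_mul, hrangeAA]
  have hfixAX : ∀ v, (A*X) *ᵥ (A *ᵥ v) = A *ᵥ v := by
    intro v
    have hv : A *ᵥ v ∈ LinearMap.range (A*X).mulVecLin := by
      rw [hrangeAX]; exact ⟨v, rfl⟩
    obtain ⟨u, hu⟩ := hv
    rw [← hu, Matrix.mulVecLin_apply, Matrix.mulVec_mulVec, hee]
  have hAXA : A * X * A = A := by
    apply mat_ext; intro v
    rw [← Matrix.mulVec_mulVec]; exact hfixAX v
  -- X*A is idempotent with range = range A
  have hX' : X = X * (A*X) := by rw [← Matrix.mul_assoc, h1]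
  have hmap : Submodule.map X.mulVecLin (LinearMap.range A.mulVecLin)
      = LinearMap.range X.mulVecLin := by
    conv_rhs => rw [hX']
    rw [Matrix.mulVecLin_mul, LinearMap.range_comp, hrangeAX]
  have hff : (X*A)*(X*A) = X*A := by
    calc X*A*(X*A) = X*A*X*A := by simp only [Matrix.mul_assoc]
      _ = X*A := by rw [h1]
  have hrangeXA : LinearMap.range (X*A).mulVecLin = LinearMap.range A.mulVecLin := by
    rw [Matrix.mulVecLin_mul, LinearMap.range_comp, hmap, h3]
  have hfixXA : ∀ v, (X*A) *ᵥ (A *ᵥ v) = A *ᵥ v := by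
    intro v
    have hv : A *ᵥ v ∈ LinearMap.range (X*A).mulVecLin := by
      rw [hrangeXA]; exact ⟨v, rfl⟩
    obtain ⟨u, hu⟩ := hv
    rw [← hu, Matrix.mulVecLin_apply, Matrix.mulVec_mulVec, hff]
  have hXAA : X * A * A = A := by
    apply mat_ext; intro v
    rw [← Matrix.mulVec_mulVec]; exact hfixXA v
  -- ker X ⊆ ker Aᴴ
  have hkerX : ∀ u, X *ᵥ u = 0 → Aᴴ *ᵥ u = 0 := by
    intro u hu
    have hrA : LinearMap.range A.mulVecLin = LinearMap.range Xᴴ.mulVecLin := h3.symm.trans h2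
    set s := Aᴴ *ᵥ u with hs
    obtain ⟨w, hw⟩ : ∃ w, Xᴴ *ᵥ w = A *ᵥ s := by
      have hmem : A *ᵥ s ∈ LinearMap.range Xᴴ.mulVecLin := by rw [← hrA]; exact ⟨s, rfl⟩
      obtain ⟨w, hw⟩ := hmem; exact ⟨w, hw⟩
    have hz : dotProduct (star s) s = 0 := by
      have h1' : star s = star u ᵥ* A := by
        rw [hs, Matrix.star_mulVec, Matrix.conjTranspose_conjTranspose]
      calc dotProduct (star s) s = (star u ᵥ* A) ⬝ᵥ s := by rw [h1']
        _ = star u ⬝ᵥ (A *ᵥ s) := (Matrix.dotProduct_mulVec _ _ _).symm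
        _ = star u ⬝ᵥ (Xᴴ *ᵥ w) := by rw [hw]
        _ = (star u ᵥ* Xᴴ) ⬝ᵥ w := Matrix.dotProduct_mulVec _ _ _
        _ = star (X *ᵥ u) ⬝ᵥ w := by rw [Matrix.star_mulVec]
        _ = 0 := by rw [hu]; simp
    exact dstar_zero hz
  -- Aᴴ * (A*X) = Aᴴ
  have hAAX : Aᴴ * (A * X) = Aᴴ := by
    apply mat_ext; intro v
    have hu0 : (A*X) *ᵥ ((A*X) *ᵥ v - v) = 0 := by
      rw [Matrix.mulVec_sub, Matrix.mulVec_mulVec, hee, sub_self]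
    have hXu : X *ᵥ ((A*X) *ᵥ v - v) = 0 := by
      have hrw : X *ᵥ ((A*X) *ᵥ v - v) = (X * (A*X)) *ᵥ ((A*X) *ᵥ v - v) := by rw [← hX']
      rw [hrw, ← Matrix.mulVec_mulVec, hu0, Matrix.mulVec_zero]
    have hAu := hkerX _ hXu
    rw [Matrix.mulVec_sub] at hAu
    rw [← Matrix.mulVec_mulVec]
    exact sub_eq_zero.mp hAu
  -- definitions
  set P : Matrix (Fin n) (Fin n) ℂ := A * X with hP
  set M : Matrix (Fin n) (Fin n) ℂ := A * A * Aᴴ with hM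
  set N : Matrix (Fin n) (Fin n) ℂ := M + 1 - P with hN
  have hPM : P * M = M := by
    rw [hP, hM]
    calc A*X*(A*A*Aᴴ) = A*X*A*A*Aᴴ := by simp only [Matrix.mul_assoc]
      _ = A*A*Aᴴ := by rw [hAXA]
  have hMP : M * P = M := by
    rw [hP, hM]
    calc A*A*Aᴴ*(A*X) = A*A*(Aᴴ*(A*X)) := by rw [Matrix.mul_assoc]
      _ = A*A*Aᴴ := by rw [hAAX]
  have hPN : P * N = M := by
    rw [hN, Matrix.mul_sub, Matrix.mul_add, Matrix.mul_one, hPM, hP, hee, ← hP,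
      add_sub_cancel_right]
  have hXP : X * P = X := by rw [hP, ← Matrix.mul_assoc, h1]
  have hXM : X * M = A * Aᴴ := by
    rw [hM]
    calc X*(A*A*Aᴴ) = X*A*A*Aᴴ := by simp only [Matrix.mul_assoc]
      _ = A*Aᴴ := by rw [hXAA]
  have hXN : X * N = A * Aᴴ := by
    rw [hN, Matrix.mul_sub, Matrix.mul_add, Matrix.mul_one, hXM, hXP, add_sub_cancel_right]
  have hAAP : A * Aᴴ * P = A * Aᴴ := by
    rw [hP, Matrix.mul_assoc A Aᴴ (A*X), hAAX]
  have hM1P : M * (1 - P) = 0 := by rw [Matrix.mul_sub, Matrix.mul_one, hMP, sub_self]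
  -- N invertible
  have hdetN : N.det ≠ 0 := by
    intro h0
    obtain ⟨v, hv0, hNv⟩ := Matrix.exists_mulVec_eq_zero_iff.mpr h0
    have hMv : M *ᵥ v = 0 := by
      have hPNv : P *ᵥ (N *ᵥ v) = 0 := by rw [hNv, Matrix.mulVec_zero]
      rwa [Matrix.mulVec_mulVec, hPN] at hPNv
    have hvP : P *ᵥ v = v := by
      have hv' : M *ᵥ v + (1 : Matrix (Fin n) (Fin n) ℂ) *ᵥ v - P *ᵥ v = 0 := by
        rw [← Matrix.add_mulVec, ← Matrix.sub_mulVec, ← hN, hNv]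
      rw [hMv, Matrix.one_mulVec, zero_add] at hv'
      exact (sub_eq_zero.mp hv').symm
    have hAHv : Aᴴ *ᵥ v = 0 := by
      have hAAv : (A*A) *ᵥ (Aᴴ *ᵥ v) = 0 := by
        rw [Matrix.mulVec_mulVec, ← hM, hMv]
      have hAv : A *ᵥ (Aᴴ *ᵥ v) = 0 := by
        have hmem : Aᴴ *ᵥ v ∈ LinearMap.ker (A*A).mulVecLin := by
          rw [LinearMap.mem_ker, Matrix.mulVecLin_apply]; exact hAAv
        rw [← hkerAA, LinearMap.mem_ker, Matrix.mulVecLin_apply] at hmem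
        exact hmem
      apply dstar_zero
      calc dotProduct (star (Aᴴ *ᵥ v)) (Aᴴ *ᵥ v)
          = (star v ᵥ* A) ⬝ᵥ (Aᴴ *ᵥ v) := by
            rw [Matrix.star_mulVec, Matrix.conjTranspose_conjTranspose]
        _ = star v ⬝ᵥ (A *ᵥ (Aᴴ *ᵥ v)) := (Matrix.dotProduct_mulVec _ _ _).symm
        _ = 0 := by rw [hAv, dotProduct_zero]
    have hv : v = 0 := by
      apply dstar_zero
      calc dotProduct (star v) v = star v ⬝ᵥ (A *ᵥ (X *ᵥ v)) := by
            rw [Matrix.mulVec_mulVec, ← hP, hvP]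
        _ = (star v ᵥ* A) ⬝ᵥ (X *ᵥ v) := Matrix.dotProduct_mulVec _ _ _
        _ = star (Aᴴ *ᵥ v) ⬝ᵥ (X *ᵥ v) := by
            rw [Matrix.star_mulVec, Matrix.conjTranspose_conjTranspose]
        _ = 0 := by rw [hAHv]; simp
    exact hv0 hv
  have hdetNu : IsUnit N.det := isUnit_iff_ne_zero.mpr hdetN
  have hXinv : X = A * Aᴴ * N⁻¹ := by
    calc X = X * (N * N⁻¹) := by rw [Matrix.mul_nonsing_inv _ hdetNu, Matrix.mul_one]
      _ = X * N * N⁻¹ := by rw [Matrix.mul_assoc]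
      _ = A * Aᴴ * N⁻¹ := by rw [hXN]
  -- continuity of the auxiliary function g
  set f : ℝ → Matrix (Fin n) (Fin n) ℂ :=
    fun lam => N + (lam : ℂ) • (1 : Matrix (Fin n) (Fin n) ℂ) with hf
  have haff : Continuous f :=
    continuous_const.add (Complex.continuous_ofReal.smul continuous_const)
  have hf0 : f 0 = N := by simp [hf]
  have hinvc : ContinuousAt Inv.inv N := by
    apply continuousAt_matrix_inv
    rw [show (Ring.inverse : ℂ → ℂ) = Inv.inv from funext fun x => Ring.inverse_eq_inv x]
    exact continuousAt_inv₀ hdetN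
  have hinvc' : ContinuousAt (fun lam : ℝ => (f lam)⁻¹) 0 := by
    apply ContinuousAt.comp _ haff.continuousAt
    rw [hf0]; exact hinvc
  have hg : ContinuousAt (fun lam : ℝ => A * Aᴴ * (f lam)⁻¹) 0 :=
    ((continuous_const.matrix_mul continuous_id).continuousAt).comp hinvc'
  have htg : Tendsto (fun lam : ℝ => A * Aᴴ * (f lam)⁻¹) (𝓝[>] (0:ℝ)) (𝓝 X) := by
    have : Tendsto (fun lam : ℝ => A * Aᴴ * (f lam)⁻¹) (𝓝 (0:ℝ))
        (𝓝 (A * Aᴴ * (f 0)⁻¹)) := hg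
    rw [hf0, ← hXinv] at this
    exact this.mono_left nhdsWithin_le_nhds
  -- eventual equality
  have hdetf : Tendsto (fun lam : ℝ => (f lam).det) (𝓝 (0:ℝ)) (𝓝 N.det) := by
    have hc := (haff.matrix_det).tendsto (0:ℝ)
    simpa only [hf0] using hc
  have hev1 : ∀ᶠ (lam : ℝ) in 𝓝[>] (0:ℝ), (f lam).det ≠ 0 :=
    (hdetf.eventually_ne hdetN).filter_mono nhdsWithin_le_nhds
  have hev2 : ∀ᶠ (lam : ℝ) in 𝓝[>] (0:ℝ), 0 < lam := eventually_mem_nhdsWithin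
  have hev : ∀ᶠ (lam : ℝ) in 𝓝[>] (0:ℝ),
      A * Aᴴ * (A ^ 2 * Aᴴ + (lam : ℂ) • (1 : Matrix (Fin n) (Fin n) ℂ))⁻¹
        = A * Aᴴ * (f lam)⁻¹ := by
    filter_upwards [hev1, hev2] with lam hdet hlam
    set μ : ℂ := (lam : ℂ) with hμ
    have hμ0 : μ ≠ 0 := by
      simp only [hμ, ne_eq, Complex.ofReal_eq_zero]; exact ne_of_gt hlam
    have hμ1 : (1:ℂ) + μ ≠ 0 := by
      intro hc
      have : (1 + lam : ℝ) = 0 := by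
        have := congrArg Complex.re hc
        simpa [hμ] using this
      linarith
    have hNl : IsUnit (f lam).det := isUnit_iff_ne_zero.mpr hdet
    -- (1-P) * (f lam)⁻¹ = (1+μ)⁻¹ • (1-P)
    have e1 : (1 - P) * f lam = (1+μ) • (1 - P) := by
      rw [hf, hN]
      rw [Matrix.mul_add, Matrix.mul_smul, Matrix.mul_one, Matrix.sub_mul, Matrix.one_mul, hPN]
      have : M + 1 - P - M = 1 - P := by abel
      rw [this, add_smul, one_smul]
    have e2 : (1+μ) • ((1 - P) * (f lam)⁻¹) = 1 - P := by
      rw [← Matrix.smul_mul, ← e1, Matrix.mul_nonsing_inv_cancel_right _ _ hNl]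
    have hkey : (1 - P) * (f lam)⁻¹ = (1+μ)⁻¹ • (1 - P) := by
      calc (1 - P) * (f lam)⁻¹
          = (1+μ)⁻¹ • ((1+μ) • ((1 - P) * (f lam)⁻¹)) := by
            rw [smul_smul, inv_mul_cancel₀ hμ1, one_smul]
        _ = (1+μ)⁻¹ • (1 - P) := by rw [e2]
    have hMμP : (M + μ • (1 : Matrix (Fin n) (Fin n) ℂ)) * P = f lam - (1+μ) • (1 - P) := by
      rw [Matrix.add_mul, Matrix.smul_mul, Matrix.one_mul, hMP]
      show M + μ • P = N + μ • (1 : Matrix (Fin n) (Fin n) ℂ) - (1+μ) • (1-P)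
      rw [hN]
      module
    have t1 : (M + μ • (1 : Matrix (Fin n) (Fin n) ℂ)) * (P * (f lam)⁻¹) = P := by
      rw [← Matrix.mul_assoc, hMμP, Matrix.sub_mul, Matrix.mul_nonsing_inv _ hNl,
        Matrix.smul_mul, hkey, smul_smul, mul_inv_cancel₀ hμ1, one_smul, sub_sub_cancel]
    have t2 : (M + μ • (1 : Matrix (Fin n) (Fin n) ℂ)) * (μ⁻¹ • (1 - P)) = 1 - P := by
      rw [Matrix.mul_smul, Matrix.add_mul, hM1P, Matrix.smul_mul, Matrix.one_mul, zero_add,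
        smul_smul, inv_mul_cancel₀ hμ0, one_smul]
    have hright : (M + μ • (1 : Matrix (Fin n) (Fin n) ℂ)) *
        (P * (f lam)⁻¹ + μ⁻¹ • (1 - P)) = 1 := by
      rw [Matrix.mul_add, t1, t2]
      abel
    have hMinv : (M + μ • (1 : Matrix (Fin n) (Fin n) ℂ))⁻¹
        = P * (f lam)⁻¹ + μ⁻¹ • (1 - P) := Matrix.inv_eq_right_inv hright
    have hA2 : A ^ 2 * Aᴴ = M := by rw [pow_two, hM]
    rw [hA2, hMinv, Matrix.mul_add]
    have u1 : A * Aᴴ * (P * (f lam)⁻¹) = A * Aᴴ * (f lam)⁻¹ := by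
      rw [← Matrix.mul_assoc, hAAP]
    have u2 : A * Aᴴ * (μ⁻¹ • (1 - P)) = 0 := by
      rw [Matrix.mul_smul, Matrix.mul_sub, Matrix.mul_one, hAAP, sub_self, smul_zero]
    rw [u1, u2, add_zero]
  exact htg.congr' (hev.mono fun lam h => h.symm)
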